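/- arXiv:1606.09632 — 5 statements merged into one kernel-verified Lean document; each statement's English description precedes it below -/
import Mathlib

section
/- For any pair of matrices A1, A2 with nonnegative real entries of size n × d, and any pair of sign vectors v1, v2 ∈ {-1,1}^d, the squared Frobenius norm of A1·diag(v1 - v2) is at most 4 times the squared Frobenius norm of A1·diag(v1) - A2·diag(v2). -/
theorem stmt_1 (n d : ℕ) (A1 A2 : Matrix (Fin n) (Fin d) ℝ)
    (hA1 : ∀ i j, 0 ≤ A1 i j) (hA2 : ∀ i j, 0 ≤ A2 i j)
    (v1 v2 : Fin d → ℝ)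
    (hv1 : ∀ j, v1 j = -1 ∨ v1 j = 1) (hv2 : ∀ j, v2 j = -1 ∨ v2 j = 1) :
    ∑ i, ∑ j, ((A1 * Matrix.diagonal (v1 - v2)) i j) ^ 2 ≤
      4 * ∑ i, ∑ j, ((A1 * Matrix.diagonal v1 - A2 * Matrix.diagonal v2) i j) ^ 2 := by
  rw [Finset.mul_sum]
  apply Finset.sum_le_sum; intro i _
  rw [Finset.mul_sum]
  apply Finset.sum_le_sum; intro j _
  simp only [Matrix.mul_diagonal, Matrix.sub_apply, Pi.sub_apply]
  rcases hv1 j with h1 | h1 <;> rcases hv2 j with h2 | h2 <;> rw [h1, h2] <;>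
    nlinarith [hA1 i j, hA2 i j, sq_nonneg (A1 i j), sq_nonneg (A2 i j),
      mul_nonneg (hA1 i j) (hA2 i j)]
end

section
/- Let n ≥ 16 and let v ∈ [0,1]^n be a vector with nonincreasing entries v_1 ≥ v_2 ≥ ... ≥ v_n ≥ 0. Then there exists an integer α with ⌈(1/2)‖v‖₂²⌉ ≤ α ≤ n such that the sum of the first α entries of v satisfies ∑_{i=1}^{α} v_i ≥ √(α·‖v‖₂² / (2·log n)). -/
open Finset

lemma log_step (m : ℕ) (hm : 1 ≤ m) :
    (1:ℝ)/(m+1) ≤ Real.log (m+1) - Real.log m := by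
  have hm0 : (0:ℝ) < m := by exact_mod_cast hm
  have hm1 : (0:ℝ) < (m:ℝ)+1 := by linarith
  have h := Real.log_le_sub_one_of_pos (show (0:ℝ) < (m:ℝ)/((m:ℝ)+1) by positivity)
  rw [Real.log_div (by positivity) (by positivity)] at h
  have : (m:ℝ)/((m:ℝ)+1) - 1 = -(1/((m:ℝ)+1)) := by field_simp; ring
  linarith [this ▸ h]

lemma harm1 (n : ℕ) (hn : 1 ≤ n) :
    ∑ i ∈ Finset.range n, (1:ℝ)/(i+1) ≤ 1 + Real.log n := by
  induction n with
  | zero => omega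
  | succ m ih =>
    rcases Nat.lt_or_ge 1 (m+1) with h1 | h1
    · have hm : 1 ≤ m := by omega
      rw [Finset.sum_range_succ]
      have hk := log_step m hm
      have := ih hm
      push_cast
      push_cast at hk this
      linarith
    · have : m = 0 := by omega
      subst this
      simp

lemma harm2 (n : ℕ) (hn : 1 ≤ n) :
    ∑ i ∈ Finset.range n, (if 1 ≤ i then (1:ℝ)/(i+1) else 0) ≤ Real.log n := by
  induction n with
  | zero => omega
  | succ m ih =>
    rcases Nat.lt_or_ge 1 (m+1) with h1 | h1
    · have hm : 1 ≤ m := by omega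
      rw [Finset.sum_range_succ, if_pos hm]
      have hk := log_step m hm
      have := ih hm
      push_cast
      push_cast at hk this
      linarith
    · have : m = 0 := by omega
      subst this
      simp

theorem stmt_2 (n : ℕ) (hn : 16 ≤ n) (v : Fin n → ℝ)
    (hv01 : ∀ i, 0 ≤ v i ∧ v i ≤ 1)
    (hmono : ∀ i j : Fin n, i ≤ j → v j ≤ v i) :
    ∃ α : ℕ, ⌈(1 / 2 : ℝ) * ∑ i, (v i) ^ 2⌉₊ ≤ α ∧ α ≤ n ∧
      Real.sqrt ((α * ∑ i, (v i) ^ 2) / (2 * Real.log n)) ≤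
        ∑ i ∈ Finset.univ.filter (fun i : Fin n => (i : ℕ) < α), v i := by
  set S := ∑ i, (v i) ^ 2 with hSdef
  have hS0 : 0 ≤ S := Finset.sum_nonneg fun i _ => sq_nonneg _
  have hn16 : (16:ℝ) ≤ n := by exact_mod_cast hn
  have hlog2 : (2:ℝ) ≤ Real.log n := by
    have h16 : Real.log 16 ≤ Real.log n := Real.log_le_log (by norm_num) hn16
    have h4 : Real.log 16 = 4 * Real.log 2 := by
      rw [show (16:ℝ) = 2^4 by norm_num, Real.log_pow]; push_cast; ring
    nlinarith [Real.log_two_gt_d9]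
  set L := 2 * Real.log n with hLdef
  have hL4 : (4:ℝ) ≤ L := by simp only [hLdef]; linarith
  have hL0 : (0:ℝ) < L := by linarith
  by_cases hS : S = 0
  · refine ⟨0, by simp [hS], Nat.zero_le n, ?_⟩
    simp
  have hSpos : 0 < S := lt_of_le_of_ne hS0 (Ne.symm hS)
  by_contra hcon
  push_neg at hcon
  set α0 := ⌈(1/2 : ℝ) * S⌉₊ with hα0def
  have hSn : S ≤ n := by
    calc S ≤ ∑ _i : Fin n, (1:ℝ) := Finset.sum_le_sum fun i _ => by
            have := hv01 i; nlinarith [this.1, this.2]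
    _ = n := by simp
  have hα0n : α0 ≤ n := Nat.ceil_le.mpr (by linarith)
  have hα0pos : 1 ≤ α0 := Nat.ceil_pos.mpr (by linarith)
  -- per-index bound
  have key : ∀ i : Fin n, α0 ≤ (i:ℕ) + 1 → (v i)^2 < S / (L * ((i:ℕ)+1)) := by
    intro i hi
    have hkn : (i:ℕ) + 1 ≤ n := i.isLt
    have hT := hcon ((i:ℕ)+1) hi hkn
    push_cast at hT
    have hcard : ((Finset.univ : Finset (Fin n)).filter (fun j : Fin n => (j:ℕ) < (i:ℕ)+1)).card
        = (i:ℕ)+1 := by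
      have hset : (Finset.univ : Finset (Fin n)).filter (fun j : Fin n => (j:ℕ) < (i:ℕ)+1)
          = Finset.Iic i := by
        ext j
        simp only [Finset.mem_filter, Finset.mem_univ, true_and, Finset.mem_Iic, Fin.le_def]
        omega
      rw [hset, Fin.card_Iic]
    have hv0 : 0 ≤ v i := (hv01 i).1
    have hk0 : (0:ℝ) < ((i:ℕ):ℝ) + 1 := by positivity
    have h1 : (((i:ℕ):ℝ)+1) * v i ≤
        ∑ j ∈ Finset.univ.filter (fun j : Fin n => (j:ℕ) < (i:ℕ)+1), v j := by
      have h0 : ∑ _j ∈ Finset.univ.filter (fun j : Fin n => (j:ℕ) < (i:ℕ)+1), v i ≤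
          ∑ j ∈ Finset.univ.filter (fun j : Fin n => (j:ℕ) < (i:ℕ)+1), v j :=
        Finset.sum_le_sum fun j hj => by
          have hji : j ≤ i := by
            have := (Finset.mem_filter.mp hj).2
            exact Fin.le_def.mpr (by omega)
          exact hmono j i hji
      rw [Finset.sum_const, hcard, nsmul_eq_mul] at h0
      push_cast at h0
      exact h0
    have hlt : (((i:ℕ):ℝ)+1) * v i < Real.sqrt (((((i:ℕ):ℝ)+1) * S) / L) :=
      lt_of_le_of_lt h1 hT
    have hsq : ((((i:ℕ):ℝ)+1) * v i)^2 < (((i:ℕ):ℝ)+1) * S / L :=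
      (Real.lt_sqrt (mul_nonneg hk0.le hv0)).mp hlt
    have hsq' : ((((i:ℕ):ℝ)+1) * v i)^2 * L < (((i:ℕ):ℝ)+1) * S :=
      (lt_div_iff₀ hL0).mp hsq
    rw [lt_div_iff₀ (by positivity)]
    have h2 : (((i:ℕ):ℝ)+1) * (v i ^ 2 * (L * (((i:ℕ):ℝ)+1))) < (((i:ℕ):ℝ)+1) * S := by
      calc (((i:ℕ):ℝ)+1) * (v i ^ 2 * (L * (((i:ℕ):ℝ)+1)))
          = ((((i:ℕ):ℝ)+1) * v i)^2 * L := by ring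
        _ < _ := hsq'
    exact (mul_lt_mul_iff_right₀ hk0).mp h2
  rcases Nat.lt_or_ge α0 2 with hα1 | hα2
  -- Case α0 = 1
  · have hα0one : α0 = 1 := by omega
    have hstrict : S < ∑ i : Fin n, S / (L * ((i:ℕ)+1)) := by
      rw [hSdef]
      exact Finset.sum_lt_sum_of_nonempty
        (Finset.univ_nonempty_iff.mpr (by exact Fin.pos_iff_nonempty.mp (by omega)))
        (fun i _ => key i (by omega))
    have heq : ∑ i : Fin n, S / (L * ((i:ℕ)+1)) = (S/L) * ∑ i ∈ Finset.range n, (1:ℝ)/(i+1) := by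
      rw [Finset.mul_sum, Fin.sum_univ_eq_sum_range (fun i => S / (L * ((i:ℕ)+1)))]
      refine Finset.sum_congr rfl fun i _ => ?_
      field_simp
    have hH := harm1 n (by omega)
    have hfrac : 0 < S / L := by positivity
    rw [heq] at hstrict
    have h5 : S/L * ∑ i ∈ Finset.range n, (1:ℝ)/(i+1) ≤ S/L * (1 + Real.log n) :=
      mul_le_mul_of_nonneg_left hH hfrac.le
    have h6 : (1:ℝ) + Real.log n ≤ L := by rw [hLdef]; linarith
    have h7 : S/L * (1 + Real.log n) ≤ S/L * L := mul_le_mul_of_nonneg_left h6 hfrac.le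
    rw [div_mul_cancel₀ S hL0.ne'] at h7
    linarith
  -- Case α0 ≥ 2
  · have hsplit := (Finset.sum_filter_add_sum_filter_not Finset.univ
      (fun i : Fin n => (i:ℕ) < α0) (fun i => (v i)^2)).symm
    have hh : ∑ i ∈ Finset.univ.filter (fun i : Fin n => (i:ℕ) < α0), (v i)^2
        ≤ ∑ i ∈ Finset.univ.filter (fun i : Fin n => (i:ℕ) < α0), v i :=
      Finset.sum_le_sum fun i _ => by have := hv01 i; nlinarith [this.1, this.2]
    have hT := hcon α0 le_rfl hα0n
    have htail : ∑ i ∈ Finset.univ.filter (fun i : Fin n => ¬ (i:ℕ) < α0), (v i)^2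
        ≤ (S/L) * Real.log n := by
      calc ∑ i ∈ Finset.univ.filter (fun i : Fin n => ¬ (i:ℕ) < α0), (v i)^2
          ≤ ∑ i ∈ Finset.univ.filter (fun i : Fin n => ¬ (i:ℕ) < α0), S / (L * ((i:ℕ)+1)) :=
            Finset.sum_le_sum fun i hi => by
              have hge : ¬ (i:ℕ) < α0 := (Finset.mem_filter.mp hi).2
              exact (key i (by omega)).le
        _ = (S/L) * ∑ i ∈ Finset.univ.filter (fun i : Fin n => ¬ (i:ℕ) < α0), (1:ℝ)/((i:ℕ)+1) := by
            rw [Finset.mul_sum]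
            refine Finset.sum_congr rfl fun i _ => ?_
            field_simp
        _ ≤ (S/L) * Real.log n := by
            have hfrac : 0 ≤ S / L := by positivity
            refine mul_le_mul_of_nonneg_left ?_ hfrac
            calc ∑ i ∈ Finset.univ.filter (fun i : Fin n => ¬ (i:ℕ) < α0), (1:ℝ)/((i:ℕ)+1)
                = ∑ i : Fin n, (if ¬ (i:ℕ) < α0 then (1:ℝ)/((i:ℕ)+1) else 0) :=
                  Finset.sum_filter _ _
              _ ≤ ∑ i : Fin n, (if 1 ≤ (i:ℕ) then (1:ℝ)/((i:ℕ)+1) else 0) := by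
                  refine Finset.sum_le_sum fun i _ => ?_
                  by_cases hc : ¬ (i:ℕ) < α0
                  · rw [if_pos hc, if_pos (by omega)]
                  · rw [if_neg hc]
                    split <;> positivity
              _ = ∑ i ∈ Finset.range n, (if 1 ≤ i then (1:ℝ)/(i+1) else 0) :=
                  Fin.sum_univ_eq_sum_range (fun i => if 1 ≤ i then (1:ℝ)/(i+1) else 0) n
              _ ≤ Real.log n := harm2 n (by omega)
    have hhalf : (S/L) * Real.log n = S / 2 := by
      rw [hLdef]
      field_simp
    have hSlt : S < Real.sqrt ((α0 * S) / L) + S / 2 := by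
      calc S = _ + _ := by rw [hSdef]; exact hsplit
      _ < Real.sqrt ((α0 * S) / L) + S / 2 := by
          rw [← hhalf]
          exact add_lt_add_of_lt_of_le (lt_of_le_of_lt hh hT) htail
    have hsq : (S/2)^2 < (α0 : ℝ) * S / L := by
      rw [← Real.lt_sqrt (by positivity)]
      linarith
    have hub : (α0 : ℝ) < (1/2 : ℝ) * S + 1 := Nat.ceil_lt_add_one (by linarith)
    have hlb2 : (2:ℝ) < S := by
      have h1 : (1:ℕ) < α0 := by omega
      rw [hα0def] at h1
      have h2 : ((1:ℕ):ℝ) < (1/2:ℝ) * S := Nat.lt_ceil.mp h1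
      push_cast at h2
      linarith
    have hsq2 : (S/2)^2 * L < (α0 : ℝ) * S := by
      rw [lt_div_iff₀ hL0] at hsq
      exact hsq
    have h3 : (α0:ℝ) * S < ((1/2:ℝ)*S+1) * S := mul_lt_mul_of_pos_right hub hSpos
    have h5 : (S/2)^2 * 4 ≤ (S/2)^2 * L := mul_le_mul_of_nonneg_left hL4 (sq_nonneg _)
    nlinarith [hsq2, h3, h5, hlb2, hSpos, mul_pos (show (0:ℝ) < S - 2 by linarith) hSpos]
end

section
/- Let r ∈ ℝ^n be a vector with nonincreasing nonnegative entries and let u ∈ ℝ^n be any vector. Let r̃ be the vector obtained by permuting the entries of r so that they are ordered the same way as the entries of u (i.e., r̃ is the rearrangement of r that is similarly ordered to u). Then for any ρ > 0, ‖r̃ - r‖₂ ≤ 2·‖ρ·u - r‖₂. -/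
theorem stmt_3 (n : ℕ) (r rt u : Fin n → ℝ)
    (hr0 : ∀ i, 0 ≤ r i)
    (hrmono : ∀ i j : Fin n, i ≤ j → r j ≤ r i)
    (σ : Equiv.Perm (Fin n)) (hperm : ∀ i, rt i = r (σ i))
    (hconsist : ∀ i j : Fin n, u j < u i → rt j ≤ rt i)
    (ρ : ℝ) (hρ : 0 < ρ) :
    Real.sqrt (∑ i, (rt i - r i) ^ 2) ≤ 2 * Real.sqrt (∑ i, (ρ * u i - r i) ^ 2) := by
  -- r j = rt (σ⁻¹ j)
  have hr : ∀ j, r j = rt (σ⁻¹ j) := by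
    intro j; simp [hperm]
  have hmono : Monovary rt u := fun i j h => hconsist j i h
  have h2 : ∑ i, r i * u i ≤ ∑ i, rt i * u i := by
    have := hmono.sum_comp_perm_mul_le_sum_mul (σ := σ⁻¹)
    simpa [hperm] using this
  have h1 : ∑ i, rt i ^ 2 = ∑ i, r i ^ 2 := by
    simp_rw [hperm]
    exact Equiv.sum_comp σ fun i => r i ^ 2
  have expand : ∀ f : Fin n → ℝ, ∑ i, (ρ * u i - f i) ^ 2 =
      ρ ^ 2 * (∑ i, u i ^ 2) - 2 * ρ * (∑ i, f i * u i) + ∑ i, f i ^ 2 := by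
    intro f
    rw [Finset.mul_sum, Finset.mul_sum, ← Finset.sum_sub_distrib, ← Finset.sum_add_distrib]
    exact Finset.sum_congr rfl fun i _ => by ring
  have key : ∑ i, (ρ * u i - rt i) ^ 2 ≤ ∑ i, (ρ * u i - r i) ^ 2 := by
    rw [expand, expand, h1]
    have : 2 * ρ * (∑ i, r i * u i) ≤ 2 * ρ * (∑ i, rt i * u i) := by
      apply mul_le_mul_of_nonneg_left h2; positivity
    linarith
  -- triangle inequality in Euclidean space
  set a : EuclideanSpace ℝ (Fin n) := WithLp.toLp 2 (fun i => rt i)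
  set b : EuclideanSpace ℝ (Fin n) := WithLp.toLp 2 (fun i => r i)
  set c : EuclideanSpace ℝ (Fin n) := WithLp.toLp 2 (fun i => ρ * u i)
  have normeq : ∀ x y : EuclideanSpace ℝ (Fin n),
      ‖x - y‖ = Real.sqrt (∑ i, (x i - y i) ^ 2) := by
    intro x y
    rw [EuclideanSpace.norm_eq]
    congr 1
    exact Finset.sum_congr rfl fun i _ => by
      simp [Real.norm_eq_abs, sq_abs]
  have tri : ‖a - b‖ ≤ ‖a - c‖ + ‖c - b‖ := norm_sub_le_norm_sub_add_norm_sub a c b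
  have e1 : ‖a - b‖ = Real.sqrt (∑ i, (rt i - r i) ^ 2) := normeq a b
  have e2 : ‖a - c‖ = Real.sqrt (∑ i, (ρ * u i - rt i) ^ 2) := by
    rw [normeq]
    congr 1
    exact Finset.sum_congr rfl fun i _ => by ring
  have e3 : ‖c - b‖ = Real.sqrt (∑ i, (ρ * u i - r i) ^ 2) := normeq c b
  have hkey' : Real.sqrt (∑ i, (ρ * u i - rt i) ^ 2) ≤ Real.sqrt (∑ i, (ρ * u i - r i) ^ 2) :=
    Real.sqrt_le_sqrt key
  rw [e1] at tri; rw [e2] at tri; rw [e3] at tri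
  linarith
end

section
/- Every matrix of the form Q = q̃·(1-h)ᵀ + (1/2)·1·hᵀ, where q̃ ∈ [1/2,1]^n and h ∈ [0,1]^d, has all entries in [1/2, 1] and is bi-monotone up to permutations: there exist permutations π of rows and σ of columns such that after applying them, each row and each column of Q is nonincreasing. In particular the intermediate model class C_Int is contained in the permutation-based class C_Perm. -/
theorem stmt_11 (n d : ℕ) (q : Fin n → ℝ) (h : Fin d → ℝ)
    (hq : ∀ i, (1 / 2 : ℝ) ≤ q i ∧ q i ≤ 1)
    (hh : ∀ j, (0 : ℝ) ≤ h j ∧ h j ≤ 1)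
    (Q : Matrix (Fin n) (Fin d) ℝ)
    (hQ : ∀ i j, Q i j = q i * (1 - h j) + (1 / 2 : ℝ) * h j) :
    (∀ i j, (1 / 2 : ℝ) ≤ Q i j ∧ Q i j ≤ 1) ∧
      ∃ (π : Equiv.Perm (Fin n)) (σ : Equiv.Perm (Fin d)),
        ∀ i i' j j', π i ≤ π i' → σ j ≤ σ j' → Q i' j' ≤ Q i j := by
  constructor
  · intro i j
    obtain ⟨h1, h2⟩ := hq i
    obtain ⟨h3, h4⟩ := hh j
    rw [hQ]
    constructor <;> nlinarith
  · refine ⟨(Fin.revPerm.trans (Tuple.sort q)).symm, (Tuple.sort h)⁻¹, ?_⟩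
    intro i i' j j' hπ hσ
    have hqmon : q i' ≤ q i := by
      have := Tuple.monotone_sort q (Fin.rev_le_rev.mpr hπ)
      simpa using this
    have hhmon : h j ≤ h j' := by
      have := Tuple.monotone_sort h hσ
      simpa using this
    rw [hQ, hQ]
    obtain ⟨h1, _⟩ := hq i
    obtain ⟨_, h4⟩ := hh j'
    nlinarith
end

section
/- For any vectors u, r ∈ ℝ^n with ‖r‖₂ = ρ > 0, if the sign-selection condition ∑_i u_i²·1[u_i > 0] ≥ ∑_i u_i²·1[u_i < 0] holds and all entries of r are nonnegative, then ‖u + r/ρ‖₂² ≥ (1/2)‖u‖₂². -/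
theorem stmt_15 (n : ℕ) (u r : Fin n → ℝ) (ρ : ℝ) (hρpos : 0 < ρ)
    (hr0 : ∀ i, 0 ≤ r i)
    (hρ : Real.sqrt (∑ i, (r i) ^ 2) = ρ)
    (hsign : ∑ i, (u i) ^ 2 * (if u i < 0 then (1 : ℝ) else 0) ≤
      ∑ i, (u i) ^ 2 * (if 0 < u i then (1 : ℝ) else 0)) :
    (1 / 2 : ℝ) * ∑ i, (u i) ^ 2 ≤ ∑ i, (u i + r i / ρ) ^ 2 := by
  set s : Fin n → ℝ := fun i => r i / ρ with hs
  have hs0 : ∀ i, 0 ≤ s i := fun i => div_nonneg (hr0 i) hρpos.le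
  have hr2 : ∑ i, (r i)^2 = ρ^2 := by
    have h0 : 0 ≤ ∑ i, (r i)^2 := Finset.sum_nonneg fun i _ => sq_nonneg _
    nlinarith [Real.sq_sqrt h0, hρ]
  have hs2 : ∑ i, (s i)^2 = 1 := by
    simp only [hs, div_pow]
    rw [← Finset.sum_div, hr2]
    field_simp
  set T := ∑ i, (u i)^2 with hT
  have hT0 : 0 ≤ T := Finset.sum_nonneg fun i _ => sq_nonneg _
  set a : Fin n → ℝ := fun i => if u i < 0 then -u i else 0 with ha
  set N := ∑ i, (u i)^2 * (if u i < 0 then (1:ℝ) else 0) with hN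
  have hN0 : 0 ≤ N := Finset.sum_nonneg fun i _ => by
    apply mul_nonneg (sq_nonneg _); split_ifs <;> norm_num
  have ha2 : ∑ i, (a i)^2 = N := by
    apply Finset.sum_congr rfl
    intro i _
    by_cases h : u i < 0 <;> simp [ha, h]
  have hNT : N ≤ T / 2 := by
    have hNP : N + (∑ i, (u i)^2 * (if 0 < u i then (1:ℝ) else 0)) ≤ T := by
      rw [hN, hT, ← Finset.sum_add_distrib]
      apply Finset.sum_le_sum
      intro i _
      rcases lt_trichotomy (u i) 0 with h | h | h
      · simp [h, asymm h]
      · simp [h]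
      · simp [h, asymm h]
    linarith
  set A := ∑ i, a i * s i with hA
  have hA0 : 0 ≤ A := Finset.sum_nonneg fun i _ => by
    apply mul_nonneg _ (hs0 i)
    simp only [ha]; split_ifs with h
    · linarith
    · exact le_rfl
  have hCS : A ^ 2 ≤ N := by
    calc A ^ 2 ≤ (∑ i, (a i)^2) * (∑ i, (s i)^2) :=
          Finset.sum_mul_sq_le_sq_mul_sq Finset.univ a s
      _ = N := by rw [ha2, hs2, mul_one]
  have hAsq : A ≤ Real.sqrt N := by
    rw [Real.le_sqrt hA0]
    · exact hCS
    · exact hN0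
  have hus : -A ≤ ∑ i, u i * s i := by
    rw [← Finset.sum_neg_distrib]
    apply Finset.sum_le_sum
    intro i _
    by_cases h : u i < 0
    · simp [ha, h]
    · have : 0 ≤ u i := not_lt.mp h
      have h1 : (a i : ℝ) = 0 := by simp [ha, h]
      rw [h1]
      simpa using mul_nonneg this (hs0 i)
  have hsqrtmono : Real.sqrt N ≤ Real.sqrt (T / 2) := Real.sqrt_le_sqrt hNT
  have hexp : ∑ i, (u i + s i)^2 = T + 2 * (∑ i, u i * s i) + 1 := by
    have : ∀ i, (u i + s i)^2 = (u i)^2 + 2 * (u i * s i) + (s i)^2 := fun i => by ring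
    simp only [this]
    rw [Finset.sum_add_distrib, Finset.sum_add_distrib, hs2, ← Finset.mul_sum]
  have hgoal : ∑ i, (u i + s i)^2 = ∑ i, (u i + r i / ρ)^2 := rfl
  rw [← hgoal, hexp]
  have hsq : (Real.sqrt (T/2))^2 = T/2 := Real.sq_sqrt (by linarith)
  nlinarith [Real.sqrt_nonneg (T/2), hAsq.trans hsqrtmono, hus, sq_nonneg (Real.sqrt (T/2) - 1)]
end
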